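/- For the automaton A, the shortest word w with q0 ∉ Q·w has length exactly 6: the word abbaba satisfies q0 ∉ Q·w, and every word of length strictly less than 6 has q0 in its image Q·w. -/

import Mathlib

inductive St | q0 | q1 | q2 | q3
deriving DecidableEq

instance : Fintype St := ⟨{.q0, .q1, .q2, .q3}, fun x => by cases x <;> decide⟩

inductive L | a | b
deriving DecidableEq

instance : Fintype L := ⟨{.a, .b}, fun x => by cases x <;> decide⟩

def step : St → L → St
  | .q0, .a => .q1
  | .q0, .b => .q0
  | .q1, .a => .q0
  | .q1, .b => .q2
  | .q2, .a => .q2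
  | .q2, .b => .q3
  | .q3, .a => .q0
  | .q3, .b => .q1

def run (q : St) (w : List L) : St := w.foldl step q

theorem stmt5 :
    (([L.a, .b, .b, .a, .b, .a] : List L).length = 6 ∧
      ¬ ∃ q : St, run q [.a, .b, .b, .a, .b, .a] = St.q0) ∧
    ∀ w : List L, w.length < 6 → ∃ q : St, run q w = St.q0 := by
  refine ⟨⟨rfl, by decide⟩, ?_⟩
  intro w hw
  rcases w with _ | ⟨x0, _ | ⟨x1, _ | ⟨x2, _ | ⟨x3, _ | ⟨x4, _ | ⟨x5, t⟩⟩⟩⟩⟩⟩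
  · decide
  · cases x0 <;> decide
  · cases x0 <;> cases x1 <;> decide
  · cases x0 <;> cases x1 <;> cases x2 <;> decide
  · cases x0 <;> cases x1 <;> cases x2 <;> cases x3 <;> decide
  · cases x0 <;> cases x1 <;> cases x2 <;> cases x3 <;> cases x4 <;> decide
  · simp at hw; omega
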